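/- Let d > 1 and let F ∈ ℂ[x_0,…,x_n] and G ∈ ℂ[y_0,…,y_m] be non-zero homogeneous polynomials of degree d in disjoint sets of variables. Suppose G essentially involves rk(G) variables, i.e. G = L_1^d + ⋯ + L_s^d where s = rk(G) and L_1,…,L_s are linearly independent linear forms in y_0,…,y_m. Then rk(F + G) = rk(F) + rk(G). -/

import Mathlib

open MvPolynomial

/-- The Waring rank of a form `P` of degree `d`: the least `r` such that
`P = L₁^d + ⋯ + L_r^d` for some linear forms `L i`. -/
noncomputable def waringRank {σ : Type*} (d : ℕ) (P : MvPolynomial σ ℂ) : ℕ :=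
  sInf {r : ℕ | ∃ L : Fin r → MvPolynomial σ ℂ,
    (∀ i, (L i).IsHomogeneous 1) ∧ P = ∑ i, (L i) ^ d}


/-- Decomposition predicate: `P` is a sum of `r` d-th powers of linear forms (multiset form). -/
def WHD {σ : Type*} (d : ℕ) (P : MvPolynomial σ ℂ) (r : ℕ) : Prop :=
  ∃ m : Multiset (MvPolynomial σ ℂ), Multiset.card m = r ∧
    (∀ q ∈ m, q.IsHomogeneous 1) ∧ P = (m.map (· ^ d)).sum

lemma whd_iff_fin {σ : Type*} {d r : ℕ} {P : MvPolynomial σ ℂ} :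
    (∃ L : Fin r → MvPolynomial σ ℂ,
      (∀ i, (L i).IsHomogeneous 1) ∧ P = ∑ i, (L i) ^ d) ↔ WHD d P r := by
  constructor
  · rintro ⟨L, hL, rfl⟩
    refine ⟨(List.ofFn L : List _), by simp, ?_, ?_⟩
    · intro q hq
      rw [Multiset.mem_coe, List.mem_ofFn] at hq
      obtain ⟨i, rfl⟩ := hq
      exact hL i
    · rw [Multiset.map_coe, Multiset.sum_coe, List.map_ofFn, List.sum_ofFn]
      rfl
  · rintro ⟨m, hcard, hmem, rfl⟩
    have hlen : m.toList.length = r := by rw [Multiset.length_toList, hcard]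
    refine ⟨fun i => m.toList.get (Fin.cast hlen.symm i), ?_, ?_⟩
    · intro i
      exact hmem _ (by rw [← Multiset.mem_toList]; apply List.get_mem)
    · conv_lhs => rw [← Multiset.coe_toList m, Multiset.map_coe, Multiset.sum_coe]
      conv_lhs => rw [← List.ofFn_get m.toList, List.map_ofFn, List.sum_ofFn]
      exact Fintype.sum_equiv (finCongr hlen) _ _ (fun i => rfl)

lemma WHD.add {σ : Type*} {d a b : ℕ} {P Q : MvPolynomial σ ℂ}
    (hP : WHD d P a) (hQ : WHD d Q b) : WHD d (P + Q) (a + b) := by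
  obtain ⟨m1, hc1, hm1, rfl⟩ := hP
  obtain ⟨m2, hc2, hm2, rfl⟩ := hQ
  refine ⟨m1 + m2, by simp [hc1, hc2], ?_, by rw [Multiset.map_add, Multiset.sum_add]⟩
  intro q hq
  rcases Multiset.mem_add.1 hq with h | h
  · exact hm1 q h
  · exact hm2 q h

lemma WHD.map {σ τ : Type*} {d r : ℕ} {P : MvPolynomial σ ℂ}
    (ψ : MvPolynomial σ ℂ →ₐ[ℂ] MvPolynomial τ ℂ)
    (hψ : ∀ v, (ψ (X v)).IsHomogeneous 1)
    (h : WHD d P r) : WHD d (ψ P) r := by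
  obtain ⟨m, hc, hm, rfl⟩ := h
  refine ⟨m.map ψ, by simp [hc], ?_, ?_⟩
  · intro q hq
    rw [Multiset.mem_map] at hq
    obtain ⟨M, hM, rfl⟩ := hq
    have h2 : ψ M = aeval (⇑ψ ∘ X) M := by conv_lhs => rw [aeval_unique ψ]
    rw [h2]
    simpa using (hm M hM).aeval (⇑ψ ∘ X) (fun v => hψ v)
  · rw [map_multiset_sum, Multiset.map_map, Multiset.map_map]
    congr 1
    apply Multiset.map_congr rfl
    intro M _
    simp [map_pow]

/-- a finitely supported function on `σ` with degree 1 is `single w 1`. -/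
lemma degree_eq_one_iff {σ : Type*} {β : σ →₀ ℕ} (h : Finsupp.degree β = 1) :
    ∃ w, β = Finsupp.single w 1 := by
  classical
  have hcard : Multiset.card β.toMultiset = 1 := by
    rw [Finsupp.card_toMultiset]
    exact h
  obtain ⟨a, ha⟩ := Multiset.card_eq_one.1 hcard
  refine ⟨a, ?_⟩
  ext b
  have hth := Finsupp.count_toMultiset β b
  rw [ha] at hth
  simp only [Multiset.count_singleton] at hth
  rw [Finsupp.single_apply, ← hth]
  by_cases hba : b = a
  · subst hba; simp
  · rw [if_neg hba, if_neg (fun h => hba h.symm)]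

/-- representation of a homogeneous linear form over finitely many variables. -/
lemma rep1 {σ : Type*} [Fintype σ] [DecidableEq σ] {p : MvPolynomial σ ℂ} (hp : p.IsHomogeneous 1) :
    p = ∑ v : σ, (coeff (Finsupp.single v 1) p) • X v := by
  apply MvPolynomial.ext
  intro β
  rw [MvPolynomial.coeff_sum]
  simp only [MvPolynomial.coeff_smul, MvPolynomial.coeff_X', smul_eq_mul]
  by_cases hβ : ∃ w, Finsupp.single w 1 = β
  · obtain ⟨w, rfl⟩ := hβ
    rw [Finset.sum_eq_single w]
    · simp
    · intro v _ hvw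
      rw [if_neg]
      · ring
      · intro hc
        exact hvw ((Finsupp.single_left_inj one_ne_zero).1 hc)
    · simp
  · have hz : (∑ v : σ, coeff (Finsupp.single v 1) p * if Finsupp.single v 1 = β then 1 else 0) = 0 := by
      apply Finset.sum_eq_zero
      intro v _
      rw [if_neg (fun hc => hβ ⟨v, hc⟩)]
      ring
    rw [hz]
    by_contra hc
    have h1 : Finsupp.degree β = 1 := by
      rw [Finsupp.degree_eq_weight_one]
      exact hp hc
    obtain ⟨w, rfl⟩ := degree_eq_one_iff h1
    exact hβ ⟨w, rfl⟩



section P2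
variable {σ τ : Type*}

lemma hsmul1 {n : ℕ} (c : ℂ) {q : MvPolynomial σ ℂ} (hq : q.IsHomogeneous n) :
    (c • q).IsHomogeneous n := by
  rw [smul_eq_C_mul]; exact hq.C_mul c

lemma aeval_rep1 [Fintype σ] [DecidableEq σ] {p : MvPolynomial σ ℂ} (hp : p.IsHomogeneous 1)
    {A : Type*} [CommSemiring A] [Algebra ℂ A] (g : σ → A) :
    aeval g p = ∑ v : σ, (coeff (Finsupp.single v 1) p) • g v := by
  conv_lhs => rw [rep1 hp]
  rw [map_sum]
  congr 1
  funext v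
  rw [smul_eq_C_mul, map_mul, aeval_C, aeval_X, ← Algebra.smul_def]

lemma aeval_zero_of_homog {d : ℕ} {P : MvPolynomial σ ℂ} (hP : P.IsHomogeneous d) (hd : d ≠ 0)
    {A : Type*} [CommSemiring A] [Algebra ℂ A] :
    aeval (fun _ : σ => (0 : A)) P = 0 := by
  conv_lhs => rw [as_sum P]
  rw [map_sum]
  apply Finset.sum_eq_zero
  intro α hα
  rw [aeval_monomial]
  have hα0 : α ≠ 0 := by
    intro h
    have hw := hP (mem_support_iff.1 hα)
    rw [h] at hw
    rw [map_zero] at hw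
    exact hd hw.symm
  obtain ⟨v, hv⟩ := Finsupp.support_nonempty_iff.2 hα0
  rw [Finsupp.prod, Finset.prod_eq_zero hv (zero_pow (Finsupp.mem_support_iff.1 hv))]
  ring

noncomputable def WAf (M : MvPolynomial (Option σ) ℂ) : MvPolynomial σ ℂ :=
  aeval (fun o => Option.elim o 0 X) M

noncomputable def Wbf (M : MvPolynomial (Option σ) ℂ) : ℂ :=
  coeff (Finsupp.single none 1) M

lemma WAf_isHomogeneous {M : MvPolynomial (Option σ) ℂ} (hM : M.IsHomogeneous 1) :
    (WAf M).IsHomogeneous 1 := by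
  have h : ∀ o : Option σ, ((fun o : Option σ => Option.elim o (0 : MvPolynomial σ ℂ) X) o).IsHomogeneous 1 := by
    intro o
    cases o
    · exact isHomogeneous_zero _ _ 1
    · exact isHomogeneous_X _ _
  simpa [WAf] using hM.aeval _ h

lemma Waeval_option [Fintype σ] [DecidableEq σ] {M : MvPolynomial (Option σ) ℂ}
    (hM : M.IsHomogeneous 1) (ℓ : MvPolynomial σ ℂ) :
    aeval (fun o : Option σ => Option.elim o ℓ X) M = WAf M + Wbf M • ℓ := by
  rw [aeval_rep1 hM, WAf, aeval_rep1 hM]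
  rw [Fintype.sum_option, Fintype.sum_option]
  show Wbf M • ℓ + _ = _
  simp only [Option.elim_none, Option.elim_some]
  rw [smul_zero, zero_add, add_comm]

lemma Waeval_scalar [Fintype σ] [DecidableEq σ] {M : MvPolynomial (Option σ) ℂ}
    (hM : M.IsHomogeneous 1) :
    aeval (fun o : Option σ => Option.elim o (1 : ℂ) 0) M = Wbf M := by
  rw [aeval_rep1 hM, Fintype.sum_option]
  show Wbf M • (1:ℂ) + _ = _
  simp only [Option.elim_none, Option.elim_some]
  rw [smul_eq_mul, mul_one]
  simp

end P2


theorem WKL {σ : Type*} [Fintype σ] [DecidableEq σ] {d r : ℕ} (hd : 2 ≤ d)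
    {P : MvPolynomial σ ℂ} (hP : P.IsHomogeneous d)
    (h : WHD d ((rename some P) + (X none : MvPolynomial (Option σ) ℂ) ^ d) r) :
    1 ≤ r ∧ WHD d P (r - 1) := by
  classical
  obtain ⟨mm, hcard, hmm1, hsum⟩ := h
  -- the master identity
  have master : ∀ ℓ : MvPolynomial σ ℂ, ℓ.IsHomogeneous 1 →
      P + ℓ ^ d = (mm.map (fun M => (WAf M + Wbf M • ℓ) ^ d)).sum := by
    intro ℓ hℓ
    have happ := congrArg (aeval (fun o : Option σ => Option.elim o ℓ X)) hsum
    rw [map_add, map_pow, map_multiset_sum, Multiset.map_map] at happ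
    have h1 : aeval (fun o : Option σ => Option.elim o ℓ X) (rename some P) = P := by
      rw [aeval_rename]
      have he : ((fun o : Option σ => Option.elim o ℓ X) ∘ some) = X := rfl
      rw [he, aeval_X_left_apply]
    have h2 : aeval (fun o : Option σ => Option.elim o ℓ X) ((X none : MvPolynomial (Option σ) ℂ)) = ℓ := by
      simp
    rw [h1, h2] at happ
    rw [happ]
    congr 1
    apply Multiset.map_congr rfl
    intro M hM
    show aeval _ (M ^ d) = _
    rw [map_pow, Waeval_option (hmm1 M hM)]
  -- the scalar identity
  have hscalar : (mm.map (fun M => Wbf M ^ d)).sum = 1 := by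
    have happ := congrArg (aeval (fun o : Option σ => Option.elim o (1 : ℂ) 0)) hsum
    rw [map_add, map_pow, map_multiset_sum, Multiset.map_map] at happ
    have h1 : aeval (fun o : Option σ => Option.elim o (1 : ℂ) 0) (rename some P) = 0 := by
      rw [aeval_rename]
      have he : ((fun o : Option σ => Option.elim o (1 : ℂ) 0) ∘ some) = (fun _ : σ => (0 : ℂ)) := rfl
      rw [he, aeval_zero_of_homog hP (by omega)]
    have h2 : aeval (fun o : Option σ => Option.elim o (1 : ℂ) 0) ((X none : MvPolynomial (Option σ) ℂ)) = 1 := by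
      simp
    rw [h1, h2, zero_add, one_pow] at happ
    have hmaps : Multiset.map (⇑(aeval (fun o : Option σ => Option.elim o (1:ℂ) 0)) ∘ fun x => x ^ d) mm
        = Multiset.map (fun M => Wbf M ^ d) mm := by
      apply Multiset.map_congr rfl
      intro M hM
      show aeval _ (M ^ d) = _
      rw [map_pow, Waeval_scalar (hmm1 M hM)]
    rw [hmaps] at happ
    exact happ.symm
  -- some term has nonzero y-coefficient
  have hK : ∃ K ∈ mm, Wbf K ≠ 0 := by
    by_contra hc
    push_neg at hc
    have h0 : (mm.map (fun M => Wbf M ^ d)).sum = 0 := by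
      apply Multiset.sum_eq_zero
      intro x hx
      rw [Multiset.mem_map] at hx
      obtain ⟨M, hM, rfl⟩ := hx
      rw [hc M hM, zero_pow (by omega : d ≠ 0)]
    rw [h0] at hscalar
    exact one_ne_zero hscalar.symm
  obtain ⟨K, hKmem, hb⟩ := hK
  have hr1 : 1 ≤ r := by
    rw [← hcard]
    exact Multiset.card_pos_iff_exists_mem.2 ⟨K, hKmem⟩
  refine ⟨hr1, ?_⟩
  by_cases hJ : ∃ J ∈ mm.erase K, Wbf J ≠ 0
  · -- CASE A : two terms involve the new variable
    obtain ⟨J, hJmem, ha⟩ := hJ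
    have hJmm : J ∈ mm := Multiset.mem_of_mem_erase hJmem
    set b := Wbf K with hbdef
    set a := Wbf J with hadef
    set A := WAf K with hAdef
    set A' := WAf J with hA'def
    set v : MvPolynomial σ ℂ := a • A - b • A' with hvdef
    obtain ⟨ω₀, hω₀⟩ := IsAlgClosed.exists_pow_nat_eq (-1 : ℂ) (n := d) (by omega)
    have hprim := Complex.isPrimitiveRoot_exp d (by omega : d ≠ 0)
    obtain ⟨ω, hωd, hωne⟩ : ∃ ω : ℂ, ω ^ d = -1 ∧ ω * a ≠ b := by
      by_cases hcase : ω₀ * a = b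
      · refine ⟨Complex.exp (2 * Real.pi * Complex.I / d) * ω₀, ?_, ?_⟩
        · rw [mul_pow, hprim.pow_eq_one, one_mul, hω₀]
        · rw [mul_assoc, hcase]
          intro hcon
          have hε1 : Complex.exp (2 * Real.pi * Complex.I / d) = 1 :=
            mul_right_cancel₀ hb (by rw [hcon, one_mul])
          exact hprim.ne_one (by omega) hε1
      · exact ⟨ω₀, hω₀, hcase⟩
    have hden : b - ω * a ≠ 0 := by
      intro hcon
      exact hωne (sub_eq_zero.1 hcon).symm
    set t₀ : ℂ := -ω / (b - ω * a) with ht₀def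
    have htt : b * t₀ = ω * (t₀ * a - 1) := by
      rw [ht₀def]
      field_simp
      ring
    set ℓ : MvPolynomial σ ℂ := b⁻¹ • (t₀ • v - A) with hℓdef
    have hA1 : A.IsHomogeneous 1 := WAf_isHomogeneous (hmm1 K hKmem)
    have hA'1 : A'.IsHomogeneous 1 := WAf_isHomogeneous (hmm1 J hJmm)
    have hv1 : v.IsHomogeneous 1 := (hsmul1 _ hA1).sub (hsmul1 _ hA'1)
    have hℓ1 : ℓ.IsHomogeneous 1 := hsmul1 _ ((hsmul1 _ hv1).sub hA1)
    have key1 : A + b • ℓ = t₀ • v := by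
      rw [hℓdef, smul_smul, mul_inv_cancel₀ hb, one_smul]
      abel
    set μ : ℂ := (t₀ * a - 1) * b⁻¹ with hμdef
    have key2 : A' + a • ℓ = μ • v := by
      rw [hℓdef, hvdef, hμdef]
      match_scalars
      · field_simp
        ring
      · field_simp
    have hμt : t₀ = ω * μ := by
      rw [hμdef]
      field_simp
      linear_combination htt
    have key3 : (t₀ • v) ^ d + (μ • v) ^ d = 0 := by
      rw [smul_pow, smul_pow, hμt, mul_pow, hωd]
      ring_nf
      rw [add_comm]
      abel_nf
      ring_nf
      simp [neg_mul]
    -- assemble the new decomposition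
    set rest := (mm.erase K).erase J with hrestdef
    have hmm2 : mm = K ::ₘ J ::ₘ rest := by
      rw [hrestdef, Multiset.cons_erase hJmem, Multiset.cons_erase hKmem]
    have hmaster := master ℓ hℓ1
    rw [hmm2] at hmaster
    rw [Multiset.map_cons, Multiset.map_cons, Multiset.sum_cons, Multiset.sum_cons] at hmaster
    rw [show WAf K + Wbf K • ℓ = A + b • ℓ from rfl, show WAf J + Wbf J • ℓ = A' + a • ℓ from rfl,
      key1, key2] at hmaster
    set S := (rest.map (fun M => (WAf M + Wbf M • ℓ) ^ d)).sum with hSdef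
    have hmaster2 : P + ℓ ^ d = S := by
      rw [hmaster, ← add_assoc, key3, zero_add]
    have hPdec : P = S + (ω • ℓ) ^ d := by
      rw [smul_pow, hωd, neg_one_smul]
      rw [← hmaster2]
      ring
    refine ⟨(ω • ℓ) ::ₘ rest.map (fun M => WAf M + Wbf M • ℓ), ?_, ?_, ?_⟩
    · have hcr : Multiset.card rest + 2 = r := by
        rw [← hcard, hmm2, Multiset.card_cons, Multiset.card_cons]
      simp only [Multiset.card_cons, Multiset.card_map]
      omega
    · intro q hq
      rcases Multiset.mem_cons.1 hq with hq1 | hq2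
      · rw [hq1]; exact hsmul1 _ hℓ1
      · rw [Multiset.mem_map] at hq2
        obtain ⟨M, hM, rfl⟩ := hq2
        have hMmm : M ∈ mm :=
          Multiset.mem_of_mem_erase (Multiset.mem_of_mem_erase (hrestdef ▸ hM))
        exact (WAf_isHomogeneous (hmm1 M hMmm)).add (hsmul1 _ hℓ1)
    · rw [Multiset.map_cons, Multiset.sum_cons, Multiset.map_map]
      rw [hPdec, add_comm]
      rfl
  · -- CASE B : only one term involves the new variable
    push_neg at hJ
    set b := Wbf K with hbdef
    set A := WAf K with hAdef
    have hmm2 : mm = K ::ₘ mm.erase K := (Multiset.cons_erase hKmem).symm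
    set S := ((mm.erase K).map (fun M => WAf M ^ d)).sum with hSdef
    have master' : ∀ ℓ : MvPolynomial σ ℂ, ℓ.IsHomogeneous 1 →
        P + ℓ ^ d = (A + b • ℓ) ^ d + S := by
      intro ℓ hℓ
      have hm := master ℓ hℓ
      rw [hmm2, Multiset.map_cons, Multiset.sum_cons] at hm
      rw [hm]
      congr 1
      rw [hSdef]
      congr 1
      apply Multiset.map_congr rfl
      intro M hM
      rw [hJ M hM, zero_smul, add_zero]
    have hA1 : A.IsHomogeneous 1 := WAf_isHomogeneous (hmm1 K hKmem)
    by_cases hA0 : A = 0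
    · refine ⟨(mm.erase K).map WAf, ?_, ?_, ?_⟩
      · rw [Multiset.card_map, Multiset.card_erase_of_mem hKmem, hcard]
        rfl
      · intro q hq
        rw [Multiset.mem_map] at hq
        obtain ⟨M, hM, rfl⟩ := hq
        exact WAf_isHomogeneous (hmm1 M (Multiset.mem_of_mem_erase hM))
      · have h0 := master' 0 (isHomogeneous_zero _ _ 1)
        rw [hA0, smul_zero, add_zero, zero_pow (by omega : d ≠ 0), zero_add, add_zero] at h0
        rw [h0, hSdef, Multiset.map_map]
        rfl
    · exfalso
      have E0 := master' 0 (isHomogeneous_zero _ _ 1)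
      rw [smul_zero, add_zero, zero_pow (by omega : d ≠ 0), add_zero] at E0
      have E1 := master' ((-b⁻¹) • A) (hsmul1 _ hA1)
      rw [smul_smul, smul_pow] at E1
      rw [show b * -b⁻¹ = -1 by rw [mul_neg, mul_inv_cancel₀ hb]] at E1
      rw [neg_one_smul, add_neg_cancel, zero_pow (by omega : d ≠ 0), zero_add] at E1
      have E2 := master' (b⁻¹ • A) (hsmul1 _ hA1)
      rw [smul_smul, smul_pow, mul_inv_cancel₀ hb, one_smul] at E2
      rw [show A + A = (2:ℂ) • A from (two_smul ℂ A).symm, smul_pow] at E2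
      -- derive the two scalar equations
      have hAd : A ^ d ≠ 0 := pow_ne_zero _ hA0
      have hc1 : (1 + (-b⁻¹) ^ d) • A ^ d = 0 := by
        rw [add_smul, one_smul]
        rw [E0] at E1
        calc A ^ d + (-b⁻¹) ^ d • A ^ d
            = (A ^ d + S + (-b⁻¹) ^ d • A ^ d) - S := by ring
          _ = 0 := by rw [E1]; ring
      have hs1 : (1 : ℂ) + (-b⁻¹) ^ d = 0 := by
        rw [smul_eq_C_mul] at hc1
        rcases mul_eq_zero.1 hc1 with h | h
        · exact C_eq_zero.1 h
        · exact absurd h hAd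
      have hc2 : (1 + (b⁻¹) ^ d - 2 ^ d) • A ^ d = 0 := by
        rw [sub_smul, add_smul, one_smul]
        rw [E0] at E2
        calc A ^ d + (b⁻¹) ^ d • A ^ d - (2:ℂ) ^ d • A ^ d
            = (A ^ d + S + (b⁻¹) ^ d • A ^ d) - ((2:ℂ) ^ d • A ^ d + S) := by ring
          _ = 0 := by rw [E2]; ring
      have hs2 : (1 : ℂ) + (b⁻¹) ^ d - 2 ^ d = 0 := by
        rw [smul_eq_C_mul] at hc2
        rcases mul_eq_zero.1 hc2 with h | h
        · exact C_eq_zero.1 h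
        · exact absurd h hAd
      have hneg : ((-b⁻¹) : ℂ) ^ d = (-1) ^ d * (b⁻¹) ^ d := by
        rw [← neg_one_mul, mul_pow]
      rcases Nat.even_or_odd d with he | ho
      · rw [he.neg_one_pow, one_mul] at hneg
        rw [hneg] at hs1
        have h2d : (2:ℂ) ^ d = 0 := by
          linear_combination hs1 - hs2
        exact pow_ne_zero d (two_ne_zero) h2d
      · rw [ho.neg_one_pow, neg_one_mul] at hneg
        rw [hneg] at hs1
        have hbd : (b⁻¹ : ℂ) ^ d = 1 := by linear_combination -hs1
        rw [hbd] at hs2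
        have h2d : (2:ℂ) ^ d = 2 := by linear_combination -hs2
        have h2n : (2:ℕ) ^ d = 2 := by
          have := h2d
          rw [show ((2:ℂ)) = ((2:ℕ):ℂ) by norm_num] at this
          rw [← Nat.cast_pow] at this
          exact_mod_cast this
        have : 2 ^ 2 ≤ 2 ^ d := Nat.pow_le_pow_right (by norm_num) hd
        omega


def WoptEquiv (σ : Type*) (s : ℕ) : (σ ⊕ Fin (s+1)) ≃ Option (σ ⊕ Fin s) where
  toFun z := Sum.elim (fun v => some (Sum.inl v))
    (fun i => Fin.cases none (fun j => some (Sum.inr j)) i) z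
  invFun o := Option.elim o (Sum.inr 0) (Sum.elim (fun v => Sum.inl v) (fun j => Sum.inr j.succ))
  left_inv := by
    rintro (v | i)
    · rfl
    · induction i using Fin.cases with
      | zero => rfl
      | succ j => simp
  right_inv := by rintro (_ | (v | j)) <;> rfl

lemma WoptEquiv_inl {σ : Type*} {s : ℕ} (v : σ) :
    WoptEquiv σ s (Sum.inl v) = some (Sum.inl v) := rfl

lemma WoptEquiv_inr0 {σ : Type*} {s : ℕ} :
    WoptEquiv σ s (Sum.inr 0) = none := by
  have h : WoptEquiv σ s (Sum.inr 0)
      = Fin.cases none (fun j => some (Sum.inr j)) (0 : Fin (s+1)) := rfl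
  rw [h, Fin.cases_zero]

lemma WoptEquiv_inrsucc {σ : Type*} {s : ℕ} (i : Fin s) :
    WoptEquiv σ s (Sum.inr i.succ) = some (Sum.inr i) := by
  have h : WoptEquiv σ s (Sum.inr i.succ)
      = Fin.cases none (fun j => some (Sum.inr j)) (i.succ) := rfl
  rw [h, Fin.cases_succ]

theorem WpeelMany {σ : Type*} [Fintype σ] [DecidableEq σ] {d : ℕ} (hd : 2 ≤ d)
    {P : MvPolynomial σ ℂ} (hP : P.IsHomogeneous d) :
    ∀ (s r : ℕ),
      WHD d ((rename Sum.inl P) +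
        ∑ i : Fin s, (X (Sum.inr i) : MvPolynomial (σ ⊕ Fin s) ℂ) ^ d) r →
      ∃ r', r' + s ≤ r ∧ WHD d P r' := by
  intro s
  induction s with
  | zero =>
    intro r h
    refine ⟨r, by omega, ?_⟩
    have h0 : (∑ i : Fin 0, (X (Sum.inr i) : MvPolynomial (σ ⊕ Fin 0) ℂ) ^ d) = 0 := rfl
    rw [h0, add_zero] at h
    have hψ : ∀ z : σ ⊕ Fin 0,
        ((aeval (Sum.elim X (fun _ : Fin 0 => (0 : MvPolynomial σ ℂ))) :
          MvPolynomial (σ ⊕ Fin 0) ℂ →ₐ[ℂ] MvPolynomial σ ℂ) (X z)).IsHomogeneous 1 := by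
      rintro (v | i)
      · simpa using isHomogeneous_X ℂ v
      · exact i.elim0
    have hmap := WHD.map _ hψ h
    have heq : (aeval (Sum.elim X (fun _ : Fin 0 => (0 : MvPolynomial σ ℂ))))
        ((rename Sum.inl) P) = P := by
      rw [aeval_rename]
      have hc : (Sum.elim X (fun _ : Fin 0 => (0 : MvPolynomial σ ℂ)) ∘ Sum.inl) = X := rfl
      rw [hc, aeval_X_left_apply]
    rwa [heq] at hmap
  | succ s ih =>
    intro r h
    have hren := WHD.map
      ((rename (⇑(WoptEquiv σ s)) : MvPolynomial (σ ⊕ Fin (s+1)) ℂ →ₐ[ℂ]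
        MvPolynomial (Option (σ ⊕ Fin s)) ℂ))
      (fun z => by rw [rename_X]; exact isHomogeneous_X _ _) h
    have hre : rename (⇑(WoptEquiv σ s))
        ((rename Sum.inl P) + ∑ i : Fin (s+1), (X (Sum.inr i) : MvPolynomial (σ ⊕ Fin (s+1)) ℂ) ^ d)
        = rename some ((rename Sum.inl P) +
            ∑ i : Fin s, (X (Sum.inr i) : MvPolynomial (σ ⊕ Fin s) ℂ) ^ d)
          + (X none : MvPolynomial (Option (σ ⊕ Fin s)) ℂ) ^ d := by
      rw [map_add, map_sum, rename_rename, map_add, map_sum, rename_rename]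
      simp only [map_pow, rename_X]
      rw [Fin.sum_univ_succ]
      have h1 : ((⇑(WoptEquiv σ s)) ∘ Sum.inl) = ((some ∘ Sum.inl) : σ → Option (σ ⊕ Fin s)) := by
        funext v; exact WoptEquiv_inl v
      rw [h1, WoptEquiv_inr0]
      have h3 : ∀ i : Fin s, (X (WoptEquiv σ s (Sum.inr i.succ)) : MvPolynomial (Option (σ ⊕ Fin s)) ℂ)
          = X (some (Sum.inr i)) := by
        intro i; rw [WoptEquiv_inrsucc]
      simp only [h3]
      ring
    rw [hre] at hren
    have hP' : ((rename Sum.inl P) +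
        ∑ i : Fin s, (X (Sum.inr i) : MvPolynomial (σ ⊕ Fin s) ℂ) ^ d).IsHomogeneous d := by
      apply (hP.rename_isHomogeneous).add
      apply IsHomogeneous.sum
      intro i _
      simpa using (isHomogeneous_X ℂ (Sum.inr i : σ ⊕ Fin s)).pow d
    obtain ⟨h1r, hWP'⟩ := WKL hd hP' hren
    obtain ⟨r', hle, hPr⟩ := ih (r - 1) hWP'
    exact ⟨r', by omega, hPr⟩


lemma vdm_extract {σ : Type*} (W : Submodule ℂ (MvPolynomial σ ℂ)) (n : ℕ)
    (mv : Fin (n+1) → MvPolynomial σ ℂ)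
    (h : ∀ t : ℂ, (∑ p : Fin (n+1), t ^ (p : ℕ) • mv p) ∈ W) :
    ∀ p, mv p ∈ W := by
  intro p
  set v : Fin (n+1) → ℂ := fun i => ((i : ℕ) : ℂ) with hv
  set V := Matrix.vandermonde v with hV
  have hdet : V.det ≠ 0 := by
    rw [hV, Matrix.det_vandermonde]
    apply Finset.prod_ne_zero_iff.2
    intro i _
    apply Finset.prod_ne_zero_iff.2
    intro j hj
    have hij : i < j := Finset.mem_Ioi.1 hj
    apply sub_ne_zero.2
    rw [hv]
    intro hc
    have : (j : ℕ) = (i : ℕ) := Nat.cast_injective hc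
    omega
  have hVV : V⁻¹ * V = 1 := Matrix.nonsing_inv_mul V (isUnit_iff_ne_zero.2 hdet)
  have hrec : mv p = ∑ i : Fin (n+1), (V⁻¹ p i) • (∑ q : Fin (n+1), (v i) ^ (q:ℕ) • mv q) := by
    simp only [Finset.smul_sum]
    rw [Finset.sum_comm]
    have hterm : ∀ q : Fin (n+1),
        (∑ i : Fin (n+1), V⁻¹ p i • (v i ^ (q:ℕ) • mv q)) = ((V⁻¹ * V) p q) • mv q := by
      intro q
      rw [Matrix.mul_apply, Finset.sum_smul]
      apply Finset.sum_congr rfl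
      intro i _
      rw [smul_smul]
      rfl
    simp only [hterm, hVV, Matrix.one_apply]
    simp
  rw [hrec]
  exact Submodule.sum_mem _ (fun i _ => Submodule.smul_mem _ _ (h (v i)))

theorem Wspan_exists {σ : Type*} [Fintype σ] [DecidableEq σ] {d : ℕ} (hd : 1 ≤ d)
    {P : MvPolynomial σ ℂ} (hP : P.IsHomogeneous d) : ∃ N, WHD d P N := by
  classical
  by_cases hP0 : P = 0
  · exact ⟨0, 0, rfl, by simp, by simp [hP0]⟩
  obtain ⟨α₀, hα₀⟩ := support_nonempty.2 hP0
  have hα₀0 : α₀ ≠ 0 := by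
    intro hzero
    have hw := hP (mem_support_iff.1 hα₀)
    rw [hzero, map_zero] at hw
    omega
  obtain ⟨v₀, _⟩ := Finsupp.support_nonempty_iff.2 hα₀0
  set W := Submodule.span ℂ
    {q : MvPolynomial σ ℂ | ∃ ℓ : MvPolynomial σ ℂ, ℓ.IsHomogeneous 1 ∧ q = ℓ ^ d} with hW
  have T : ∀ (j : ℕ), j ≤ d → ∀ (u : MvPolynomial σ ℂ), u.IsHomogeneous 1 →
      ∀ (g : Fin j → MvPolynomial σ ℂ), (∀ i, (g i).IsHomogeneous 1) →
      u ^ (d - j) * ∏ i, g i ∈ W := by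
    intro j
    induction j with
    | zero =>
      intro _ u hu g _
      rw [Nat.sub_zero, Fin.prod_univ_zero, mul_one]
      exact Submodule.subset_span ⟨u, hu, rfl⟩
    | succ j ihj =>
      intro hj1 u hu g hg
      set n := d - j with hn
      have hn1 : 1 ≤ n := by omega
      have hdj : d - (j+1) = n - 1 := by omega
      set v := g 0 with hvdef
      have hv1 : v.IsHomogeneous 1 := hg 0
      set rest : Fin j → MvPolynomial σ ℂ := fun i => g i.succ with hrestdef
      have hyp : ∀ t : ℂ, (∑ p : Fin (n+1), t ^ (p:ℕ) •
          ((v ^ (p:ℕ) * u ^ (n - (p:ℕ)) * ((Nat.choose n (p:ℕ) : ℕ) : MvPolynomial σ ℂ))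
            * ∏ i, rest i)) ∈ W := by
        intro t
        have hmem := ihj (by omega) (t • v + u) ((hsmul1 t hv1).add hu) rest (fun i => hg i.succ)
        have hexp : (t • v + u) ^ (d - j) * ∏ i, rest i
            = ∑ p : Fin (n+1), t ^ (p:ℕ) •
              ((v ^ (p:ℕ) * u ^ (n - (p:ℕ)) * ((Nat.choose n (p:ℕ) : ℕ) : MvPolynomial σ ℂ))
                * ∏ i, rest i) := by
          rw [← hn, add_pow, Finset.sum_mul, ← Fin.sum_univ_eq_sum_range]
          apply Finset.sum_congr rfl
          intro p _
          rw [smul_pow, smul_mul_assoc, smul_mul_assoc, smul_mul_assoc]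
        rw [hexp] at hmem
        exact hmem
      have hext := vdm_extract W n _ hyp ⟨1, by omega⟩
      have hval : ((⟨1, by omega⟩ : Fin (n+1)) : ℕ) = 1 := rfl
      rw [hval, pow_one, Nat.choose_one_right] at hext
      have hsm := Submodule.smul_mem W ((n:ℂ)⁻¹) hext
      have hne : ((n:ℂ)) ≠ 0 := Nat.cast_ne_zero.2 (by omega)
      have hCC : (C ((n:ℂ)⁻¹) : MvPolynomial σ ℂ) * C ((n:ℂ)) = 1 := by
        rw [← map_mul, inv_mul_cancel₀ hne, map_one]
      have hgoal : u ^ (d - (j+1)) * ∏ i, g i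
          = ((n:ℂ)⁻¹) • (v * u ^ (n - 1) * ((n : ℕ) : MvPolynomial σ ℂ) * ∏ i, rest i) := by
        rw [hdj, Fin.prod_univ_succ, ← hvdef, ← hrestdef]
        rw [smul_eq_C_mul]
        have hnc : ((n : ℕ) : MvPolynomial σ ℂ) = C ((n:ℂ)) :=
          (map_natCast (C : ℂ →+* MvPolynomial σ ℂ) n).symm
        rw [hnc]
        calc u ^ (n-1) * (v * ∏ i, rest i)
            = (C ((n:ℂ)⁻¹) * C ((n:ℂ))) * (u ^ (n-1) * (v * ∏ i, rest i)) := by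
              rw [hCC, one_mul]
          _ = C ((n:ℂ)⁻¹) * (v * u ^ (n - 1) * C ((n:ℂ)) * ∏ i, rest i) := by ring
      rw [hgoal]
      exact hsm
  have hmono : ∀ α ∈ P.support, (monomial α (1:ℂ)) ∈ W := by
    intro α hα
    have hdeg : Finsupp.degree α = d := by
      rw [Finsupp.degree_eq_weight_one]
      exact hP (mem_support_iff.1 hα)
    have hlen : α.toMultiset.toList.length = d := by
      rw [Multiset.length_toList, Finsupp.card_toMultiset]
      exact hdeg
    set l := α.toMultiset.toList with hl
    have hprodX : monomial α (1:ℂ) = ∏ i : Fin d, X (l.get (Fin.cast hlen.symm i)) := by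
      rw [monomial_eq, map_one, one_mul]
      have hmap : α.prod (fun v k => (X v : MvPolynomial σ ℂ) ^ k)
          = ((α.mapDomain X).prod (fun q k => q ^ k)) := by
        rw [Finsupp.prod_mapDomain_index_inj (X_injective)]
      rw [hmap, ← Finsupp.prod_toMultiset, ← Finsupp.toMultiset_map]
      conv_lhs => rw [show α.toMultiset = (l : Multiset σ) from (Multiset.coe_toList _).symm]
      rw [Multiset.map_coe, Multiset.prod_coe]
      conv_lhs => rw [← List.ofFn_get l, List.map_ofFn, List.prod_ofFn]
      exact Fintype.prod_equiv (finCongr hlen) (fun i => (X ∘ l.get) i)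
        (fun i => X (l.get (Fin.cast hlen.symm i))) (fun i => rfl)
    rw [hprodX]
    have hT := T d (le_refl d) (X v₀) (isHomogeneous_X _ _)
      (fun i => X (l.get (Fin.cast hlen.symm i))) (fun i => isHomogeneous_X _ _)
    rw [Nat.sub_self, pow_zero, one_mul] at hT
    exact hT
  have hPW : P ∈ W := by
    have hrw : P = ∑ α ∈ P.support, (coeff α P) • monomial α (1:ℂ) := by
      conv_lhs => rw [as_sum P]
      apply Finset.sum_congr rfl
      intro α _
      rw [smul_monomial, smul_eq_mul, mul_one]
    rw [hrw]
    exact Submodule.sum_mem _ (fun α hα => Submodule.smul_mem _ _ (hmono α hα))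
  rw [hW, Submodule.mem_span_set'] at hPW
  obtain ⟨N, f, g, hsum⟩ := hPW
  refine ⟨N, ?_⟩
  rw [← whd_iff_fin]
  have hgi : ∀ i : Fin N, ∃ ℓ : MvPolynomial σ ℂ, ℓ.IsHomogeneous 1 ∧
      (g i : MvPolynomial σ ℂ) = ℓ ^ d := fun i => (g i).2
  choose ℓv hℓv1 hℓveq using hgi
  have hzi : ∀ i : Fin N, ∃ z : ℂ, z ^ d = f i :=
    fun i => IsAlgClosed.exists_pow_nat_eq (f i) (by omega)
  choose zv hzv using hzi
  refine ⟨fun i => zv i • ℓv i, fun i => hsmul1 _ (hℓv1 i), ?_⟩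
  rw [← hsum]
  apply Finset.sum_congr rfl
  intro i _
  rw [smul_pow, hzv i, ← hℓveq i]

/-- SAC holds when `G` essentially involves `rk(G)` variables, i.e. `G` is a sum of
`rk(G)` powers of linearly independent linear forms. -/
theorem stmt2 (n m d s : ℕ) (hd : 1 < d)
    (F : MvPolynomial (Fin (n + 1)) ℂ) (G : MvPolynomial (Fin (m + 1)) ℂ)
    (hF0 : F ≠ 0) (hG0 : G ≠ 0)
    (hF : F.IsHomogeneous d) (hG : G.IsHomogeneous d)
    (hs : waringRank d G = s)
    (L : Fin s → MvPolynomial (Fin (m + 1)) ℂ)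
    (hL1 : ∀ i, (L i).IsHomogeneous 1)
    (hLind : LinearIndependent ℂ L)
    (hGdec : G = ∑ i, (L i) ^ d) :
    waringRank d
        (rename (Sum.inl : Fin (n + 1) → Fin (n + 1) ⊕ Fin (m + 1)) F +
          rename (Sum.inr : Fin (m + 1) → Fin (n + 1) ⊕ Fin (m + 1)) G) =
      waringRank d F + waringRank d G := by
  classical
  set f := rename (Sum.inl : Fin (n + 1) → Fin (n + 1) ⊕ Fin (m + 1)) F +
      rename (Sum.inr : Fin (m + 1) → Fin (n + 1) ⊕ Fin (m + 1)) G with hfdef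
  -- coefficient vectors of the L i
  set cv : Fin s → (Fin (m+1) → ℂ) := fun i w => coeff (Finsupp.single w 1) (L i) with hcvdef
  have hLrep : ∀ i, L i = ∑ w : Fin (m+1), cv i w • X w := fun i => rep1 (hL1 i)
  -- the linear map Ψ
  set Ψ : (Fin s → ℂ) →ₗ[ℂ] (Fin (m+1) → ℂ) :=
    { toFun := fun y => ∑ i, y i • cv i,
      map_add' := by
        intro y z
        simp only [Pi.add_apply, add_smul]
        rw [Finset.sum_add_distrib],
      map_smul' := by
        intro c y
        simp only [Pi.smul_apply, smul_eq_mul, RingHom.id_apply, Finset.smul_sum, smul_smul] } with hΨdef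
  have hcvind : LinearIndependent ℂ cv := by
    rw [Fintype.linearIndependent_iff]
    intro gg hgg
    have hsum0 : (∑ i, gg i • L i) = 0 := by
      have hstep : (∑ i, gg i • L i) = ∑ w : Fin (m+1), (∑ i, gg i * cv i w) • X w := by
        calc ∑ i, gg i • L i = ∑ i, ∑ w : Fin (m+1), (gg i * cv i w) • X w := by
              apply Finset.sum_congr rfl
              intro i _
              rw [hLrep i, Finset.smul_sum]
              apply Finset.sum_congr rfl
              intro w _
              rw [smul_smul]
          _ = ∑ w : Fin (m+1), (∑ i, gg i * cv i w) • X w := by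
              rw [Finset.sum_comm]
              apply Finset.sum_congr rfl
              intro w _
              rw [Finset.sum_smul]
      rw [hstep]
      apply Finset.sum_eq_zero
      intro w _
      have hw : (∑ i, gg i • cv i) w = 0 := by rw [hgg]; rfl
      rw [Finset.sum_apply] at hw
      simp only [Pi.smul_apply, smul_eq_mul] at hw
      rw [hw, zero_smul]
    exact Fintype.linearIndependent_iff.1 hLind gg hsum0
  have hΨinj : LinearMap.ker Ψ = ⊥ := by
    rw [LinearMap.ker_eq_bot']
    intro y hy
    funext i
    exact Fintype.linearIndependent_iff.1 hcvind y hy i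
  obtain ⟨gL, hgL⟩ := LinearMap.exists_leftInverse_of_injective Ψ hΨinj
  have hΨapp : ∀ y, Ψ y = ∑ i, y i • cv i := fun y => rfl
  have hΨsingle : ∀ i : Fin s, Ψ (Pi.single i 1) = cv i := by
    intro i
    rw [hΨapp]
    rw [Finset.sum_eq_single i]
    · simp
    · intro j _ hji
      rw [Pi.single_eq_of_ne hji, zero_smul]
    · simp
  have hgLc : ∀ i : Fin s, gL (cv i) = Pi.single i 1 := by
    intro i
    rw [← hΨsingle i]
    have := LinearMap.ext_iff.1 hgL (Pi.single i 1)
    simpa using this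
  -- the substitution Θ
  set Θfun : (Fin (n+1) ⊕ Fin (m+1)) → MvPolynomial (Fin (n+1) ⊕ Fin s) ℂ :=
    Sum.elim (fun v => X (Sum.inl v))
      (fun w => ∑ j : Fin s, gL (Pi.single w 1) j • X (Sum.inr j)) with hΘfun
  set Θ : MvPolynomial (Fin (n+1) ⊕ Fin (m+1)) ℂ →ₐ[ℂ] MvPolynomial (Fin (n+1) ⊕ Fin s) ℂ :=
    aeval Θfun with hΘdef
  have hΘX : ∀ z, (Θ (X z)).IsHomogeneous 1 := by
    rintro (v | w)
    · rw [hΘdef, aeval_X]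
      exact isHomogeneous_X _ _
    · rw [hΘdef, aeval_X]
      apply IsHomogeneous.sum
      intro j _
      exact hsmul1 _ (isHomogeneous_X _ _)
  have hΘL : ∀ i, Θ (rename Sum.inr (L i)) = X (Sum.inr i) := by
    intro i
    rw [hΘdef, aeval_rename, aeval_rep1 (hL1 i)]
    have hstep : (∑ w : Fin (m+1), coeff (Finsupp.single w 1) (L i) • ((Θfun ∘ Sum.inr) w))
        = ∑ j : Fin s, (gL (cv i) j) • (X (Sum.inr j) : MvPolynomial (Fin (n+1) ⊕ Fin s) ℂ) := by
      calc ∑ w : Fin (m+1), coeff (Finsupp.single w 1) (L i) • ((Θfun ∘ Sum.inr) w)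
          = ∑ w : Fin (m+1), ∑ j : Fin s,
              (cv i w * gL (Pi.single w 1) j) • (X (Sum.inr j) : MvPolynomial (Fin (n+1) ⊕ Fin s) ℂ) := by
            apply Finset.sum_congr rfl
            intro w _
            show cv i w • (∑ j : Fin s, gL (Pi.single w 1) j • (X (Sum.inr j) : MvPolynomial (Fin (n+1) ⊕ Fin s) ℂ)) = _
            rw [Finset.smul_sum]
            apply Finset.sum_congr rfl
            intro j _
            rw [smul_smul]
        _ = ∑ j : Fin s, (∑ w : Fin (m+1), cv i w * gL (Pi.single w 1) j) •
              (X (Sum.inr j) : MvPolynomial (Fin (n+1) ⊕ Fin s) ℂ) := by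
            rw [Finset.sum_comm]
            apply Finset.sum_congr rfl
            intro j _
            rw [Finset.sum_smul]
        _ = ∑ j : Fin s, (gL (cv i) j) • (X (Sum.inr j) : MvPolynomial (Fin (n+1) ⊕ Fin s) ℂ) := by
            apply Finset.sum_congr rfl
            intro j _
            congr 1
            have hcvi : cv i = ∑ w : Fin (m+1), cv i w • (Pi.single w (1:ℂ) : Fin (m+1) → ℂ) := by
              funext u
              rw [Finset.sum_apply]
              simp only [Pi.smul_apply, Pi.single_apply, smul_eq_mul, mul_ite, mul_one, mul_zero]
              rw [Finset.sum_ite_eq Finset.univ u (cv i)]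
              simp
            have hlin : gL (cv i) = ∑ w : Fin (m+1), cv i w • gL (Pi.single w 1) := by
              conv_lhs => rw [hcvi]
              rw [map_sum]
              apply Finset.sum_congr rfl
              intro w _
              rw [map_smul]
            rw [hlin, Finset.sum_apply]
            apply Finset.sum_congr rfl
            intro w _
            simp
    rw [hstep, hgLc i]
    rw [Finset.sum_eq_single i]
    · simp
    · intro j _ hji
      rw [Pi.single_eq_of_ne hji, zero_smul]
    · simp
  have hΘf : Θ f = rename Sum.inl F +
      ∑ i : Fin s, (X (Sum.inr i) : MvPolynomial (Fin (n+1) ⊕ Fin s) ℂ) ^ d := by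
    rw [hfdef, map_add]
    congr 1
    · rw [hΘdef, aeval_rename]
      have hc : Θfun ∘ Sum.inl = X ∘ Sum.inl := by funext v; rfl
      rw [hc, ← aeval_rename, aeval_X_left_apply]
    · rw [hGdec, map_sum, map_sum]
      apply Finset.sum_congr rfl
      intro i _
      rw [map_pow, map_pow, hΘL i]
  -- rank bookkeeping
  have hFne : ∃ N, WHD d F N := Wspan_exists (by omega) hF
  obtain ⟨NF, hNF⟩ := hFne
  have hFmem : WHD d F (waringRank d F) := by
    apply whd_iff_fin.1
    apply Nat.sInf_mem (s := {r : ℕ | ∃ L : Fin r → MvPolynomial (Fin (n+1)) ℂ,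
      (∀ i, (L i).IsHomogeneous 1) ∧ F = ∑ i, (L i) ^ d})
    exact ⟨NF, whd_iff_fin.2 hNF⟩
  have hGmem : WHD d G s := whd_iff_fin.1 ⟨L, hL1, hGdec⟩
  have hupper : WHD d f (waringRank d F + s) := by
    rw [hfdef]
    apply WHD.add
    · exact WHD.map (rename Sum.inl) (fun v => by rw [rename_X]; exact isHomogeneous_X _ _) hFmem
    · exact WHD.map (rename Sum.inr) (fun v => by rw [rename_X]; exact isHomogeneous_X _ _) hGmem
  have hle1 : waringRank d f ≤ waringRank d F + s := Nat.sInf_le (whd_iff_fin.2 hupper)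
  have hfmem : WHD d f (waringRank d f) := by
    apply whd_iff_fin.1
    apply Nat.sInf_mem (s := {r : ℕ | ∃ L : Fin r → MvPolynomial (Fin (n+1) ⊕ Fin (m+1)) ℂ,
      (∀ i, (L i).IsHomogeneous 1) ∧ f = ∑ i, (L i) ^ d})
    exact ⟨waringRank d F + s, whd_iff_fin.2 hupper⟩
  have hΘf2 := WHD.map Θ hΘX hfmem
  rw [hΘf] at hΘf2
  obtain ⟨r', hr's, hFdec⟩ := WpeelMany (by omega) hF s (waringRank d f) hΘf2
  have hge : waringRank d F + s ≤ waringRank d f := by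
    have hFr' : waringRank d F ≤ r' := Nat.sInf_le (whd_iff_fin.2 hFdec)
    omega
  rw [hs]
  omega
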